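/- arXiv:1208.0911 — 3 statements merged into one kernel-verified Lean document; each statement's English description precedes it below -/
import Mathlib

section
/- If f ∈ F_α is not almost everywhere equal to 0, then for every p ∈ (0,+∞) one has ∫_ℝ |Φ_f(θ)|^p dθ = ∫_ℝ exp(−p ∫_ℝ |θ f(x)|^{α(x)} dx) dθ < ∞; in particular Φ_f belongs to L^p(ℝ) for every p ∈ (0,+∞). -/
open MeasureTheory

/-- For `c, q > 0`, the function `t ↦ exp (-(c * |t| ^ q))` is integrable on `ℝ`. -/
lemma integrable_exp_neg_abs_rpow {c q : ℝ} (hc : 0 < c) (hq : 0 < q) :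
    Integrable (fun t : ℝ => Real.exp (-(c * |t| ^ q))) := by
  obtain ⟨n, hn⟩ : ∃ n : ℕ, 2 ≤ (n : ℝ) * q := by
    refine ⟨⌈2 / q⌉₊, ?_⟩
    have h1 : (2 : ℝ) / q ≤ (⌈2 / q⌉₊ : ℝ) := Nat.le_ceil _
    calc (2 : ℝ) = 2 / q * q := by field_simp
      _ ≤ (⌈2 / q⌉₊ : ℝ) * q := by gcongr
  set M : ℝ := (n.factorial : ℝ) / c ^ n with hM
  have hM0 : 0 < M := by positivity
  have hcont : Continuous fun t : ℝ => Real.exp (-(c * |t| ^ q)) := by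
    exact Real.continuous_exp.comp
      ((continuous_const.mul ((Real.continuous_rpow_const hq.le).comp continuous_abs)).neg)
  have hbase : Integrable fun t : ℝ => (2 + 2 * M) * (1 + t ^ 2)⁻¹ :=
    integrable_inv_one_add_sq.const_mul _
  refine hbase.mono' hcont.aestronglyMeasurable (Filter.Eventually.of_forall fun t => ?_)
  rw [Real.norm_eq_abs, abs_of_pos (Real.exp_pos _)]
  have ht2 : (0 : ℝ) < 1 + t ^ 2 := by positivity
  have habs : (0 : ℝ) ≤ |t| := abs_nonneg t
  have hrnn : 0 ≤ |t| ^ q := Real.rpow_nonneg habs q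
  rcases le_or_gt (|t|) 1 with h | h
  · have h1 : Real.exp (-(c * |t| ^ q)) ≤ 1 := by
      rw [Real.exp_le_one_iff]
      nlinarith
    have h2 : 1 + t ^ 2 ≤ 2 := by nlinarith [sq_abs t]
    have h3 : (1 : ℝ) ≤ (2 + 2 * M) * (1 + t ^ 2)⁻¹ := by
      rw [← div_eq_mul_inv, le_div_iff₀ ht2, one_mul]
      nlinarith
    linarith
  · have hb0 : (0 : ℝ) < |t| := lt_trans one_pos h
    have hx : 0 < c * |t| ^ q := mul_pos hc (Real.rpow_pos_of_pos hb0 q)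
    have key : (c * |t| ^ q) ^ n / (n.factorial : ℝ) ≤ Real.exp (c * |t| ^ q) :=
      Real.pow_div_factorial_le_exp _ hx.le n
    have h3 : Real.exp (-(c * |t| ^ q)) ≤ (n.factorial : ℝ) / (c * |t| ^ q) ^ n := by
      rw [Real.exp_neg]
      have hkey0 : (0 : ℝ) < (c * |t| ^ q) ^ n / (n.factorial : ℝ) := by positivity
      have := one_div_le_one_div_of_le hkey0 key
      rw [one_div, one_div, inv_div] at this
      exact this
    have h4 : (n.factorial : ℝ) / (c * |t| ^ q) ^ n = M / (|t| ^ q) ^ n := by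
      rw [hM, mul_pow, ← div_div]
    have h5 : t ^ 2 ≤ (|t| ^ q) ^ n := by
      have e1 : (|t| ^ q) ^ n = |t| ^ (q * n) := by
        rw [← Real.rpow_natCast (|t| ^ q) n, ← Real.rpow_mul habs]
      have e2 : |t| ^ ((2 : ℕ) : ℝ) ≤ |t| ^ (q * n) :=
        Real.rpow_le_rpow_of_exponent_le h.le (by push_cast; linarith)
      rw [Real.rpow_natCast, sq_abs] at e2
      rw [e1]; exact e2
    have ht2' : (0 : ℝ) < t ^ 2 := by rw [← sq_abs]; positivity
    have h6 : M / (|t| ^ q) ^ n ≤ M / t ^ 2 :=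
      div_le_div_of_nonneg_left hM0.le ht2' h5
    have h7 : M / t ^ 2 ≤ (2 + 2 * M) * (1 + t ^ 2)⁻¹ := by
      have h1t : (1 : ℝ) ≤ t ^ 2 := by nlinarith [sq_abs t]
      rw [← div_eq_mul_inv, div_le_div_iff₀ ht2' ht2]
      nlinarith [mul_le_mul_of_nonneg_left h1t hM0.le]
    calc Real.exp (-(c * |t| ^ q)) ≤ (n.factorial : ℝ) / (c * |t| ^ q) ^ n := h3
      _ = M / (|t| ^ q) ^ n := h4
      _ ≤ M / t ^ 2 := h6
      _ ≤ (2 + 2 * M) * (1 + t ^ 2)⁻¹ := h7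

/-- Φ_f(θ) = exp(−∫_ℝ |θ f(x)|^{α(x)} dx). -/
noncomputable def Phi (α f : ℝ → ℝ) (θ : ℝ) : ℝ :=
  Real.exp (-∫ x : ℝ, |θ * f x| ^ α x)

/-- if f ∈ F_α is not a.e. 0, then for every p ∈ (0,∞),
∫ |Φ_f(θ)|^p dθ = ∫ exp(−p ∫ |θ f(x)|^{α(x)} dx) dθ < ∞; in particular Φ_f ∈ L^p(ℝ). -/
theorem Phi_memLp
    (a b : ℝ) (ha : 0 < a) (hab : a < b) (hb : b < 2)
    (α : ℝ → ℝ) (hαm : Measurable α) (hα : ∀ x, α x ∈ Set.Icc a b)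
    (f : ℝ → ℝ) (hfm : Measurable f) (hfi : Integrable (fun x => |f x| ^ α x))
    (hf0 : ¬ (f =ᵐ[volume] 0))
    (p : ℝ) (hp : 0 < p) :
    Integrable (fun θ : ℝ => |Phi α f θ| ^ p) ∧
    (∫ θ : ℝ, |Phi α f θ| ^ p) =
      (∫ θ : ℝ, Real.exp (-(p * ∫ x : ℝ, |θ * f x| ^ α x))) ∧
    MemLp (Phi α f) (ENNReal.ofReal p) volume := by
  have hnn : ∀ θ x : ℝ, 0 ≤ |θ * f x| ^ α x := fun θ x => Real.rpow_nonneg (abs_nonneg _) _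
  have hInn : ∀ θ : ℝ, 0 ≤ ∫ x : ℝ, |θ * f x| ^ α x :=
    fun θ => integral_nonneg (fun x => hnn θ x)
  set C : ℝ := ∫ x : ℝ, |f x| ^ α x with hC
  -- C > 0
  have hCpos : 0 < C := by
    rw [hC]
    refine (integral_pos_iff_support_of_nonneg
      (fun x => Real.rpow_nonneg (abs_nonneg _) _) hfi).mpr ?_
    by_contra hμ
    push_neg at hμ
    have hμ0 : volume (Function.support fun x => |f x| ^ α x) = 0 := le_antisymm hμ zero_le
    apply hf0
    have hsub : {x : ℝ | f x ≠ 0} ⊆ Function.support fun x => |f x| ^ α x := by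
      intro x hx
      exact (Real.rpow_pos_of_pos (abs_pos.mpr hx) _).ne'
    have : volume {x : ℝ | f x ≠ 0} = 0 :=
      measure_mono_null hsub hμ0
    filter_upwards [ae_iff.mpr this] with x hx using hx
  -- measurability of the integrand in x for each θ
  have hmeas : ∀ θ : ℝ, Measurable fun x : ℝ => |θ * f x| ^ α x :=
    fun θ => (measurable_const.mul hfm).abs.pow hαm
  -- integrability in x for each θ
  have hint : ∀ θ : ℝ, Integrable fun x : ℝ => |θ * f x| ^ α x := by
    intro θ
    refine (hfi.const_mul (max (|θ| ^ a) (|θ| ^ b))).mono'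
      (hmeas θ).aestronglyMeasurable (Filter.Eventually.of_forall fun x => ?_)
    rw [Real.norm_eq_abs, abs_of_nonneg (hnn θ x), abs_mul,
      Real.mul_rpow (abs_nonneg _) (abs_nonneg _)]
    have h1 : |θ| ^ α x ≤ max (|θ| ^ a) (|θ| ^ b) := by
      rcases le_or_gt 1 (|θ|) with h | h
      · exact le_max_of_le_right (Real.rpow_le_rpow_of_exponent_le h (hα x).2)
      · rcases (abs_nonneg θ).eq_or_lt with h0 | h0
        · rw [← h0, Real.zero_rpow (by linarith [(hα x).1] : α x ≠ 0)]
          exact le_max_of_le_left (Real.rpow_nonneg le_rfl a)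
        · exact le_max_of_le_left (Real.rpow_le_rpow_of_exponent_ge h0 h.le (hα x).1)
    exact mul_le_mul_of_nonneg_right h1 (Real.rpow_nonneg (abs_nonneg _) _)
  -- lower bound on the inner integral for |θ| ≥ 1
  have hlow : ∀ θ : ℝ, 1 ≤ |θ| → |θ| ^ a * C ≤ ∫ x : ℝ, |θ * f x| ^ α x := by
    intro θ hθ
    rw [hC, ← integral_const_mul]
    refine integral_mono (hfi.const_mul _) (hint θ) fun x => ?_
    rw [abs_mul, Real.mul_rpow (abs_nonneg _) (abs_nonneg _)]
    exact mul_le_mul_of_nonneg_right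
      (Real.rpow_le_rpow_of_exponent_le hθ (hα x).1)
      (Real.rpow_nonneg (abs_nonneg _) _)
  -- measurability in θ of the inner integral
  have hIm : StronglyMeasurable fun θ : ℝ => ∫ x : ℝ, |θ * f x| ^ α x := by
    have hFm : Measurable fun q : ℝ × ℝ => |q.1 * f q.2| ^ α q.2 :=
      (measurable_fst.mul (hfm.comp measurable_snd)).abs.pow (hαm.comp measurable_snd)
    exact hFm.stronglyMeasurable.integral_prod_right'
  -- pointwise formula
  have hPhi : ∀ θ : ℝ, |Phi α f θ| ^ p
      = Real.exp (-(p * ∫ x : ℝ, |θ * f x| ^ α x)) := by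
    intro θ
    rw [Phi, abs_of_pos (Real.exp_pos _), Real.rpow_def_of_pos (Real.exp_pos _), Real.log_exp]
    congr 1
    ring
  -- integrability of the majorized function
  have hG : Integrable fun θ : ℝ => Real.exp (-(p * ∫ x : ℝ, |θ * f x| ^ α x)) := by
    have hmG : Measurable fun θ : ℝ => Real.exp (-(p * ∫ x : ℝ, |θ * f x| ^ α x)) :=
      Real.measurable_exp.comp ((measurable_const.mul hIm.measurable).neg)
    have hc : (0 : ℝ) < p * C := mul_pos hp hCpos
    refine ((integrable_exp_neg_abs_rpow hc ha).const_mul (Real.exp (p * C))).mono'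
      hmG.aestronglyMeasurable (Filter.Eventually.of_forall fun θ => ?_)
    rw [Real.norm_eq_abs, abs_of_pos (Real.exp_pos _), ← Real.exp_add, Real.exp_le_exp]
    rcases le_or_gt (|θ|) 1 with h | h
    · have h1 : |θ| ^ a ≤ 1 := Real.rpow_le_one (abs_nonneg θ) h ha.le
      have h2 : 0 ≤ p * ∫ x : ℝ, |θ * f x| ^ α x := mul_nonneg hp.le (hInn θ)
      nlinarith
    · have h2 := hlow θ h.le
      have h3 : p * (|θ| ^ a * C) ≤ p * ∫ x : ℝ, |θ * f x| ^ α x :=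
        mul_le_mul_of_nonneg_left h2 hp.le
      nlinarith
  -- assemble
  have hIntp : Integrable fun θ : ℝ => |Phi α f θ| ^ p :=
    hG.congr (Filter.Eventually.of_forall fun θ => (hPhi θ).symm)
  refine ⟨hIntp, integral_congr_ae (Filter.Eventually.of_forall hPhi), ?_⟩
  have hΦm : AEStronglyMeasurable (Phi α f) volume :=
    (Real.measurable_exp.comp hIm.measurable.neg).aestronglyMeasurable
  have hq0 : ENNReal.ofReal p ≠ 0 := (ENNReal.ofReal_pos.mpr hp).ne'
  have hqt : ENNReal.ofReal p ≠ ⊤ := ENNReal.ofReal_ne_top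
  have := (memLp_norm_rpow_iff (p := ENNReal.ofReal p) hΦm hq0 hqt).mp ?_
  · exact this
  · rw [ENNReal.div_self hq0 hqt]
    rw [memLp_one_iff_integrable]
    refine hIntp.congr (Filter.Eventually.of_forall fun θ => ?_)
    simp only [ENNReal.toReal_ofReal hp.le, Real.norm_eq_abs]
end

section
/- Let f ∈ F_α be not almost everywhere equal to 0 and let μ_f be a probability measure on ℝ whose characteristic function is Φ_f. Then for every real number λ ∈ [q, +∞) one has η_f(q^{j₀(λ,q)+1}) ≤ μ_f({x ∈ ℝ : |x| > λ}) ≤ η_f(q^{j₀(λ,q)−1}). -/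
open MeasureTheory

/-- η_f(ξ) = ∫_ℝ φ(θ)(1 − exp(−∫_ℝ |ξ⁻¹ θ f(x)|^{α(x)} dx)) dθ. -/
noncomputable def etaF (α f φ : ℝ → ℝ) (ξ : ℝ) : ℝ :=
  ∫ θ : ℝ, φ θ * (1 - Real.exp (-∫ x : ℝ, |ξ⁻¹ * θ * f x| ^ α x))

/-- j₀(λ,q) = ⌊log λ / log q⌋. -/
noncomputable def j0 (lam q : ℝ) : ℤ :=
  ⌊Real.log lam / Real.log q⌋

/-- for every λ ≥ q,
η_f(q^{j₀(λ,q)+1}) ≤ μ_f(|x| > λ) ≤ η_f(q^{j₀(λ,q)−1}). -/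
theorem tail_bounds_by_eta
    (a b : ℝ) (ha : 0 < a) (hab : a < b) (hb : b < 2)
    (α : ℝ → ℝ) (hαm : Measurable α) (hα : ∀ x, α x ∈ Set.Icc a b)
    (f : ℝ → ℝ) (hfm : Measurable f) (hfi : Integrable (fun x => |f x| ^ α x))
    (hf0 : ¬ (f =ᵐ[volume] 0))
    (μ : Measure ℝ) (hμprob : IsProbabilityMeasure μ)
    (hμchar : ∀ θ : ℝ,
      (∫ x : ℝ, Complex.exp (Complex.I * θ * x) ∂μ) = (Phi α f θ : ℂ))
    (q : ℝ) (hq : 1 < q)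
    (φ : ℝ → ℝ) (hφeven : ∀ θ, φ (-θ) = φ θ) (hφint : Integrable φ)
    (hφmom : ∀ γ ∈ Set.Ico (0 : ℝ) 4, Integrable (fun θ : ℝ => (1 + |θ|) ^ γ * |φ θ|))
    (φhat : ℝ → ℝ)
    (hφhat : ∀ x : ℝ, (φhat x : ℂ) = ∫ θ : ℝ, Complex.exp (-(Complex.I * x * θ)) * (φ θ : ℂ))
    (hφhat01 : ∀ x, φhat x ∈ Set.Icc (0 : ℝ) 1)
    (hφhat1 : ∀ x : ℝ, |x| ≤ 1 → φhat x = 1)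
    (hφhat0 : ∀ x : ℝ, (1 + q) / 2 ≤ |x| → φhat x = 0) :
    ∀ lam : ℝ, q ≤ lam →
      etaF α f φ (q ^ (j0 lam q + 1)) ≤ (μ {x : ℝ | lam < |x|}).toReal ∧
      (μ {x : ℝ | lam < |x|}).toReal ≤ etaF α f φ (q ^ (j0 lam q - 1)) := by
  intro lam hlam
  have hq0 : (0 : ℝ) < q := lt_trans one_pos hq
  have hlog : 0 < Real.log q := Real.log_pos hq
  have hlam0 : (0 : ℝ) < lam := lt_of_lt_of_le hq0 hlam
  set j : ℤ := j0 lam q with hj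
  -- basic facts about j0
  have hjle : q ^ j ≤ lam := by
    have hfl : (↑j : ℝ) ≤ Real.log lam / Real.log q := Int.floor_le _
    have h1 : (j : ℝ) * Real.log q ≤ Real.log lam := by
      have := mul_le_mul_of_nonneg_right hfl hlog.le
      rwa [div_mul_cancel₀ _ hlog.ne'] at this
    exact (Real.log_le_log_iff (zpow_pos hq0 j) hlam0).mp
      (by rw [Real.log_zpow]; exact h1)
  have hlamlt : lam < q ^ (j + 1) := by
    have hfl : Real.log lam / Real.log q < (j : ℝ) + 1 := Int.lt_floor_add_one _
    have h1 : Real.log lam < ((j : ℝ) + 1) * Real.log q := by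
      have := mul_lt_mul_of_pos_right hfl hlog
      rwa [div_mul_cancel₀ _ hlog.ne'] at this
    refine (Real.log_lt_log_iff hlam0 (zpow_pos hq0 _)).mp ?_
    rw [Real.log_zpow]; push_cast; linarith
  -- measurability of Phi
  have hPhim : Measurable (Phi α f) := by
    have hsm : StronglyMeasurable (fun t : ℝ => ∫ x : ℝ, Complex.exp (Complex.I * t * x) ∂μ) := by
      apply StronglyMeasurable.integral_prod_right
        (f := fun (t : ℝ) (x : ℝ) => Complex.exp (Complex.I * t * x))
      apply Measurable.stronglyMeasurable
      apply Complex.measurable_exp.comp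
      exact ((measurable_const.mul (Complex.measurable_ofReal.comp measurable_fst)).mul
        (Complex.measurable_ofReal.comp measurable_snd))
    have heq : Phi α f = fun t : ℝ => (∫ x : ℝ, Complex.exp (Complex.I * (t:ℂ) * (x:ℂ)) ∂μ).re := by
      funext t; rw [hμchar t, Complex.ofReal_re]
    rw [heq]
    exact Complex.measurable_re.comp hsm.measurable
  -- Phi bounds
  have hPhi_nonneg : ∀ t, 0 ≤ Phi α f t := fun t => (Real.exp_pos _).le
  have hPhi_le_one : ∀ t, Phi α f t ≤ 1 := by
    intro t
    have h0 : 0 ≤ ∫ x : ℝ, |t * f x| ^ α x :=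
      integral_nonneg fun x => Real.rpow_nonneg (abs_nonneg _) _
    have : Real.exp (-∫ x : ℝ, |t * f x| ^ α x) ≤ Real.exp 0 :=
      Real.exp_le_exp.mpr (by linarith)
    simpa [Phi] using this
  -- measurable representative of φ
  obtain ⟨φ', hφ'sm, hφeq⟩ := hφint.1
  have hφhatm : Measurable φhat := by
    have hφhat' : ∀ x : ℝ,
        (φhat x : ℂ) = ∫ θ : ℝ, Complex.exp (-(Complex.I * x * θ)) * (φ' θ : ℂ) := by
      intro x
      rw [hφhat x]
      exact integral_congr_ae (hφeq.mono fun θ hθ => by simp only [hθ])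
    have hsm : StronglyMeasurable
        (fun x : ℝ => ∫ θ : ℝ, Complex.exp (-(Complex.I * x * θ)) * (φ' θ : ℂ)) := by
      apply StronglyMeasurable.integral_prod_right
        (f := fun (x : ℝ) (θ : ℝ) => Complex.exp (-(Complex.I * x * θ)) * (φ' θ : ℂ))
      apply Measurable.stronglyMeasurable
      apply Measurable.mul
      · apply Complex.measurable_exp.comp
        apply Measurable.neg
        exact ((measurable_const.mul (Complex.measurable_ofReal.comp measurable_fst)).mul
          (Complex.measurable_ofReal.comp measurable_snd))
      · exact Complex.measurable_ofReal.comp (hφ'sm.measurable.comp measurable_snd)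
    have heq : φhat = fun x : ℝ =>
        (∫ θ : ℝ, Complex.exp (-(Complex.I * (x:ℂ) * (θ:ℂ))) * (φ' θ : ℂ)).re := by
      funext x; rw [← hφhat' x, Complex.ofReal_re]
    rw [heq]
    exact Complex.measurable_re.comp hsm.measurable
  -- total integral of φ is 1
  have hφtotal : ∫ θ : ℝ, φ θ = 1 := by
    have h0 := hφhat 0
    rw [hφhat1 0 (by simp)] at h0
    simp only [Complex.ofReal_zero, mul_zero, zero_mul, neg_zero, Complex.exp_zero,
      one_mul, Complex.ofReal_one] at h0
    have h2 : ∫ θ : ℝ, ((φ θ : ℝ) : ℂ) = ((∫ θ : ℝ, φ θ : ℝ) : ℂ) := integral_ofReal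
    rw [h2] at h0
    exact_mod_cast h0.symm
  -- integrability of x ↦ φhat (-(ξ⁻¹ x)) wrt μ
  have hg : ∀ ξ : ℝ, Integrable (fun x => φhat (-(ξ⁻¹ * x))) μ := by
    intro ξ
    refine Integrable.mono' (integrable_const (1 : ℝ)) ?_ ?_
    · exact ((hφhatm.comp ((measurable_id.const_mul ξ⁻¹).neg)).aestronglyMeasurable)
    · refine Filter.Eventually.of_forall fun x => ?_
      have h := hφhat01 (-(ξ⁻¹ * x))
      rw [Real.norm_eq_abs, abs_le]
      constructor <;> linarith [h.1, h.2]
  -- the key identity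
  have hkey : ∀ ξ : ℝ, etaF α f φ ξ = ∫ x, (1 - φhat (-(ξ⁻¹ * x))) ∂μ := by
    intro ξ
    -- integrability of φ · Φ(ξ⁻¹·)
    have hφPhi : Integrable (fun θ => φ θ * Phi α f (ξ⁻¹ * θ)) := by
      refine Integrable.mono' hφint.norm ?_ ?_
      · exact hφint.1.mul
          ((hPhim.comp (measurable_id.const_mul ξ⁻¹)).aestronglyMeasurable)
      · refine Filter.Eventually.of_forall fun θ => ?_
        rw [Real.norm_eq_abs, Real.norm_eq_abs, abs_mul]
        have h1 := hPhi_nonneg (ξ⁻¹ * θ)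
        have h2 := hPhi_le_one (ξ⁻¹ * θ)
        rw [abs_of_nonneg h1]
        exact mul_le_of_le_one_right (abs_nonneg _) h2
    -- Fubini identity
    have hmain : ∫ θ : ℝ, φ θ * Phi α f (ξ⁻¹ * θ) = ∫ x, φhat (-(ξ⁻¹ * x)) ∂μ := by
      have hF : Integrable
          (Function.uncurry fun (θ : ℝ) (x : ℝ) =>
            (φ θ : ℂ) * Complex.exp (Complex.I * (ξ⁻¹ * θ : ℝ) * x))
          (volume.prod μ) := by
        have hbase : Integrable (fun z : ℝ × ℝ => |φ z.1| * (1 : ℝ)) (volume.prod μ) :=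
          hφint.norm.mul_prod (integrable_const 1)
        refine Integrable.mono' hbase ?_ ?_
        · have hb2 : Integrable (fun z : ℝ × ℝ => (φ z.1 : ℂ) * (1 : ℂ)) (volume.prod μ) :=
            hφint.ofReal.mul_prod (integrable_const (1 : ℂ))
          have h1 : AEStronglyMeasurable (fun z : ℝ × ℝ => (φ z.1 : ℂ)) (volume.prod μ) := by
            simpa using hb2.1
          refine h1.mul (Measurable.aestronglyMeasurable ?_)
          apply Complex.measurable_exp.comp
          apply Measurable.mul
          · apply measurable_const.mul
            exact Complex.measurable_ofReal.comp (measurable_fst.const_mul ξ⁻¹)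
          · exact Complex.measurable_ofReal.comp measurable_snd
        · refine Filter.Eventually.of_forall fun z => ?_
          simp only [Function.uncurry]
          rw [norm_mul]
          have : Complex.I * ((ξ⁻¹ * z.1 : ℝ) : ℂ) * (z.2 : ℂ) =
              ((ξ⁻¹ * z.1 * z.2 : ℝ) : ℂ) * Complex.I := by push_cast; ring
          rw [this, Complex.norm_exp_ofReal_mul_I, Complex.norm_real, Real.norm_eq_abs, mul_one]
      have hC : ((∫ θ : ℝ, φ θ * Phi α f (ξ⁻¹ * θ) : ℝ) : ℂ) =
          ((∫ x, φhat (-(ξ⁻¹ * x)) ∂μ : ℝ) : ℂ) := by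
        calc ((∫ θ : ℝ, φ θ * Phi α f (ξ⁻¹ * θ) : ℝ) : ℂ)
            = ∫ θ : ℝ, ((φ θ * Phi α f (ξ⁻¹ * θ) : ℝ) : ℂ) := integral_ofReal.symm
          _ = ∫ θ : ℝ, (φ θ : ℂ) * ∫ x, Complex.exp (Complex.I * (ξ⁻¹ * θ : ℝ) * x) ∂μ := by
              refine integral_congr_ae (Filter.Eventually.of_forall fun θ => ?_)
              dsimp only
              rw [Complex.ofReal_mul, ← hμchar (ξ⁻¹ * θ)]
          _ = ∫ θ : ℝ, ∫ x, (φ θ : ℂ) * Complex.exp (Complex.I * (ξ⁻¹ * θ : ℝ) * x) ∂μ := by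
              refine integral_congr_ae (Filter.Eventually.of_forall fun θ => ?_)
              dsimp only
              rw [integral_const_mul]
          _ = ∫ x : ℝ, (∫ θ : ℝ, (φ θ : ℂ) * Complex.exp (Complex.I * (ξ⁻¹ * θ : ℝ) * (x : ℂ))) ∂μ := by
              exact integral_integral_swap hF
          _ = ∫ x, ((φhat (-(ξ⁻¹ * x)) : ℝ) : ℂ) ∂μ := by
              refine integral_congr_ae (Filter.Eventually.of_forall fun x => ?_)
              dsimp only
              rw [hφhat (-(ξ⁻¹ * x))]
              refine integral_congr_ae (Filter.Eventually.of_forall fun θ => ?_)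
              dsimp only
              rw [mul_comm]
              congr 1
              push_cast
              ring
          _ = ((∫ x, φhat (-(ξ⁻¹ * x)) ∂μ : ℝ) : ℂ) := integral_ofReal
      exact Complex.ofReal_injective hC
    have hetaF : etaF α f φ ξ = ∫ θ : ℝ, (φ θ - φ θ * Phi α f (ξ⁻¹ * θ)) := by
      unfold etaF Phi
      refine integral_congr_ae (Filter.Eventually.of_forall fun θ => ?_)
      ring
    rw [hetaF, integral_sub hφint hφPhi, hφtotal, hmain,
      integral_sub (integrable_const 1) (hg ξ)]
    simp
  -- measurable tail sets
  have hS : ∀ r : ℝ, MeasurableSet {x : ℝ | r < |x|} := fun r =>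
    measurableSet_lt measurable_const measurable_abs
  -- integrability of the μ-integrand
  have hgint : ∀ ξ : ℝ, Integrable (fun x => 1 - φhat (-(ξ⁻¹ * x))) μ :=
    fun ξ => (integrable_const 1).sub (hg ξ)
  -- lower-type bound: ∫ (1 - φhat(-x/ξ)) dμ ≤ μ{|x| > ξ}
  have hb1 : ∀ ξ : ℝ, 0 < ξ →
      ∫ x, (1 - φhat (-(ξ⁻¹ * x))) ∂μ ≤ (μ {x : ℝ | ξ < |x|}).toReal := by
    intro ξ hξ
    have hle : (fun x => 1 - φhat (-(ξ⁻¹ * x))) ≤ {x : ℝ | ξ < |x|}.indicator 1 := by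
      intro x
      by_cases hx : x ∈ {x : ℝ | ξ < |x|}
      · rw [Set.indicator_of_mem hx]
        have := (hφhat01 (-(ξ⁻¹ * x))).1
        simp only [Pi.one_apply]
        linarith
      · rw [Set.indicator_of_notMem hx]
        have hxle : |x| ≤ ξ := not_lt.mp hx
        have habs : |(-(ξ⁻¹ * x))| ≤ 1 := by
          rw [abs_neg, abs_mul, abs_inv, abs_of_pos hξ]
          calc ξ⁻¹ * |x| ≤ ξ⁻¹ * ξ :=
                mul_le_mul_of_nonneg_left hxle (inv_nonneg.mpr hξ.le)
            _ = 1 := inv_mul_cancel₀ hξ.ne'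
        dsimp only
        rw [hφhat1 _ habs]
        norm_num
    calc ∫ x, (1 - φhat (-(ξ⁻¹ * x))) ∂μ
        ≤ ∫ x, {x : ℝ | ξ < |x|}.indicator 1 x ∂μ :=
          integral_mono (hgint ξ) ((integrable_const 1).indicator (hS ξ)) hle
      _ = (μ {x : ℝ | ξ < |x|}).toReal := integral_indicator_one (hS ξ)
  -- upper-type bound
  have hb2 : ∀ ξ lam' : ℝ, 0 < ξ → ξ * (1 + q) / 2 ≤ lam' →
      (μ {x : ℝ | lam' < |x|}).toReal ≤ ∫ x, (1 - φhat (-(ξ⁻¹ * x))) ∂μ := by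
    intro ξ lam' hξ hle'
    have hle : {x : ℝ | lam' < |x|}.indicator 1 ≤ (fun x => 1 - φhat (-(ξ⁻¹ * x))) := by
      intro x
      by_cases hx : x ∈ {x : ℝ | lam' < |x|}
      · rw [Set.indicator_of_mem hx]
        have hx' : lam' < |x| := hx
        have habs : (1 + q) / 2 ≤ |(-(ξ⁻¹ * x))| := by
          rw [abs_neg, abs_mul, abs_inv, abs_of_pos hξ]
          have h1 : ξ * (1 + q) / 2 ≤ |x| := le_trans hle' hx'.le
          have h2 : ξ⁻¹ * (ξ * (1 + q) / 2) ≤ ξ⁻¹ * |x| :=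
            mul_le_mul_of_nonneg_left h1 (inv_nonneg.mpr hξ.le)
          have h3 : ξ⁻¹ * (ξ * (1 + q) / 2) = (1 + q) / 2 := by
            field_simp
          linarith
        dsimp only [Pi.one_apply]
        rw [hφhat0 _ habs]
        norm_num
      · rw [Set.indicator_of_notMem hx]
        have := (hφhat01 (-(ξ⁻¹ * x))).2
        linarith
    calc (μ {x : ℝ | lam' < |x|}).toReal
        = ∫ x, {x : ℝ | lam' < |x|}.indicator 1 x ∂μ := (integral_indicator_one (hS lam')).symm
      _ ≤ ∫ x, (1 - φhat (-(ξ⁻¹ * x))) ∂μ :=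
          integral_mono ((integrable_const 1).indicator (hS lam')) (hgint ξ) hle
  constructor
  · calc etaF α f φ (q ^ (j + 1))
        = ∫ x, (1 - φhat (-((q ^ (j + 1) : ℝ)⁻¹ * x))) ∂μ := hkey _
      _ ≤ (μ {x : ℝ | q ^ (j + 1) < |x|}).toReal := hb1 _ (zpow_pos hq0 _)
      _ ≤ (μ {x : ℝ | lam < |x|}).toReal := by
          refine ENNReal.toReal_mono (measure_ne_top μ _) (measure_mono ?_)
          intro x hx
          exact lt_trans hlamlt hx
  · have h2 : q ^ (j - 1) * (1 + q) / 2 ≤ lam := by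
      have hlt : q ^ (j - 1) < q ^ j := zpow_lt_zpow_right₀ hq (by omega)
      have hmul : q ^ (j - 1) * q = q ^ j := by
        rw [← zpow_add_one₀ hq0.ne']
        congr 1
        omega
      have heq : q ^ (j - 1) * (1 + q) / 2 = (q ^ (j - 1) + q ^ j) / 2 := by
        rw [← hmul]; ring
      rw [heq]
      linarith
    calc (μ {x : ℝ | lam < |x|}).toReal
        ≤ ∫ x, (1 - φhat (-((q ^ (j - 1) : ℝ)⁻¹ * x))) ∂μ :=
          hb2 _ lam (zpow_pos hq0 _) h2
      _ = etaF α f φ (q ^ (j - 1)) := (hkey _).symm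
end

section
/- Set c₁ = ∫_ℝ (1+|θ|)^{2b} |φ(θ)| dθ and c₂ = max_{γ ∈ [a,b]} C(γ)^{−1}. Then for every f ∈ F_α and every real number ξ ≥ 1 one has ρ_f(ξ) ≤ c₁ c₂² (T_f(ξ))². -/
open MeasureTheory

/-- C(γ) = 2/π if γ = 1 and (1−γ)/(Γ(2−γ)cos(πγ/2)) otherwise. -/
noncomputable def Cfun (γ : ℝ) : ℝ :=
  if γ = 1 then 2 / Real.pi
  else (1 - γ) / (Real.Gamma (2 - γ) * Real.cos (Real.pi * γ / 2))

/-- T_f(λ) = ∫_ℝ |λ⁻¹ f(x)|^{α(x)} C(α(x)) dx. -/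
noncomputable def Tf (α f : ℝ → ℝ) (lam : ℝ) : ℝ :=
  ∫ x : ℝ, |lam⁻¹ * f x| ^ α x * Cfun (α x)

/-- ρ_f(ξ) = ∫_ℝ |φ(θ)| · |∫ |ξ⁻¹θ f(x)|^{α(x)} dx − 1 + exp(−∫ |ξ⁻¹θ f(x)|^{α(x)} dx)| dθ. -/
noncomputable def rhoF (α f φ : ℝ → ℝ) (ξ : ℝ) : ℝ :=
  ∫ θ : ℝ, |φ θ| *
    |(∫ x : ℝ, |ξ⁻¹ * θ * f x| ^ α x) - 1 +
      Real.exp (-∫ x : ℝ, |ξ⁻¹ * θ * f x| ^ α x)|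

-- auxiliary lemmas

lemma quad_exp_bound {u : ℝ} (hu : 0 ≤ u) : |u - 1 + Real.exp (-u)| ≤ u ^ 2 := by
  have h0 : 0 ≤ u - 1 + Real.exp (-u) := by
    have := Real.add_one_le_exp (-u); linarith
  rw [abs_of_nonneg h0]
  have hd : ∀ v : ℝ, HasDerivAt (fun v : ℝ => v ^ 2 - v + 1 - Real.exp (-v))
      (2 * v - 1 + Real.exp (-v)) v := by
    intro v
    have h1 : HasDerivAt (fun v : ℝ => v ^ 2) (2 * v) v := by
      simpa using hasDerivAt_pow 2 v
    have h2 : HasDerivAt (fun v : ℝ => Real.exp (-v)) (-Real.exp (-v)) v := by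
      simpa using (hasDerivAt_neg v).exp
    have h3 := ((h1.sub (hasDerivAt_id v)).add_const 1).sub h2
    exact h3.congr_deriv (by ring)
  have hmono : MonotoneOn (fun v : ℝ => v ^ 2 - v + 1 - Real.exp (-v)) (Set.Ici 0) := by
    apply monotoneOn_of_deriv_nonneg (convex_Ici 0)
    · exact (Differentiable.continuous fun v => (hd v).differentiableAt).continuousOn
    · exact fun v _ => (hd v).differentiableAt.differentiableWithinAt
    · intro v hv
      rw [(hd v).deriv]
      have h4 := Real.add_one_le_exp (-v)
      have hv' : 0 < v := by simpa [interior_Ici] using hv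
      linarith
  have := hmono Set.self_mem_Ici (Set.mem_Ici.mpr hu) hu
  simp only [Real.exp_zero, neg_zero] at this
  norm_num at this
  linarith

lemma Cfun_eq {γ : ℝ} (h1 : γ ≠ 1) :
    Cfun γ = |1 - γ| / (Real.Gamma (2 - γ) * Real.sin (Real.pi * |1 - γ| / 2)) := by
  have hcos : Real.cos (Real.pi * γ / 2) = Real.sin (Real.pi * (1 - γ) / 2) := by
    rw [← Real.cos_pi_div_two_sub]
    congr 1; ring
  rw [Cfun, if_neg h1, hcos]
  rcases lt_or_gt_of_ne (fun h : γ = 1 => h1 h) with h | h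
  · rw [abs_of_pos (by linarith : (0:ℝ) < 1 - γ)]
  · rw [abs_of_neg (by linarith : (1:ℝ) - γ < 0)]
    rw [show Real.pi * -(1 - γ) / 2 = -(Real.pi * (1 - γ) / 2) by ring, Real.sin_neg]
    ring

lemma Cfun_bound {γ : ℝ} (h0 : 0 < γ) (h2 : γ < 2) :
    0 < Cfun γ ∧ Cfun γ ≤ max (Real.Gamma (2 - γ))⁻¹ (2 / Real.pi) ∧
      (Cfun γ)⁻¹ ≤ max (Real.Gamma (2 - γ) * (Real.pi / 2)) (Real.pi / 2) := by
  have hπ := Real.pi_pos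
  by_cases h1 : γ = 1
  · subst h1
    rw [Cfun, if_pos rfl]
    refine ⟨by positivity, le_max_right _ _, ?_⟩
    rw [show ((2:ℝ)/Real.pi)⁻¹ = Real.pi / 2 by rw [inv_div]]
    exact le_max_right _ _
  · set t := |1 - γ| with htdef
    have ht0 : 0 < t := abs_pos.mpr (sub_ne_zero.mpr fun h => h1 (by linarith))
    have ht1 : t ≤ 1 := abs_le.mpr ⟨by linarith, by linarith⟩
    have hG : 0 < Real.Gamma (2 - γ) := Real.Gamma_pos_of_pos (by linarith)
    have hsinpos : 0 < Real.sin (Real.pi * t / 2) :=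
      Real.sin_pos_of_pos_of_lt_pi (by positivity) (by nlinarith)
    have hsin_le : Real.sin (Real.pi * t / 2) ≤ Real.pi * t / 2 :=
      Real.sin_le (by positivity)
    have hle_sin : t ≤ Real.sin (Real.pi * t / 2) := by
      have hms := Real.mul_le_sin (x := Real.pi * t / 2) (by positivity) (by nlinarith)
      have he : 2 / Real.pi * (Real.pi * t / 2) = t := by field_simp
      linarith [he ▸ hms]
    rw [Cfun_eq h1]
    refine ⟨div_pos ht0 (mul_pos hG hsinpos), ?_, ?_⟩
    · refine le_trans ?_ (le_max_left _ _)
      rw [div_le_iff₀ (by positivity)]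
      have : (Real.Gamma (2 - γ))⁻¹ * (Real.Gamma (2 - γ) * Real.sin (Real.pi * t / 2))
          = Real.sin (Real.pi * t / 2) := by field_simp
      rw [this]; exact hle_sin
    · refine le_trans ?_ (le_max_left _ _)
      rw [inv_div, div_le_iff₀ ht0]
      nlinarith

/-- with c₁ = ∫ (1+|θ|)^{2b} |φ(θ)| dθ and c₂ = max_{γ∈[a,b]} C(γ)⁻¹, one has
ρ_f(ξ) ≤ c₁ c₂² (T_f(ξ))² for every f ∈ F_α and ξ ≥ 1. -/
theorem rho_le_Tf_sq
    (a b : ℝ) (ha : 0 < a) (hab : a < b) (hb : b < 2)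
    (α : ℝ → ℝ) (hαm : Measurable α) (hα : ∀ x, α x ∈ Set.Icc a b)
    (φ : ℝ → ℝ) (hφm : Measurable φ)
    (hφmom : Integrable (fun θ : ℝ => (1 + |θ|) ^ (2 * b) * |φ θ|))
    (f : ℝ → ℝ) (hfm : Measurable f) (hfi : Integrable (fun x => |f x| ^ α x))
    (ξ : ℝ) (hξ : 1 ≤ ξ) :
    rhoF α f φ ξ ≤
      (∫ θ : ℝ, (1 + |θ|) ^ (2 * b) * |φ θ|) *
        (sSup ((fun γ => (Cfun γ)⁻¹) '' Set.Icc a b)) ^ 2 * (Tf α f ξ) ^ 2 := by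
  have hπ := Real.pi_pos
  have hξ0 : (0:ℝ) < ξ := lt_of_lt_of_le one_pos hξ
  -- Gamma continuity at positive points
  have hGcont : ∀ s : ℝ, 0 < s → ContinuousAt Real.Gamma s := by
    intro s hs
    refine (Real.differentiableAt_Gamma fun m => ?_).continuousAt
    intro h
    have : (0:ℝ) ≤ (m:ℝ) := Nat.cast_nonneg m
    rw [h] at hs; linarith
  -- extrema of Gamma on [2-b, 2-a]
  have hJc : IsCompact (Set.Icc (2 - b) (2 - a)) := isCompact_Icc
  have hJne : (Set.Icc (2 - b) (2 - a)).Nonempty := Set.nonempty_Icc.mpr (by linarith)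
  have hJcont : ContinuousOn Real.Gamma (Set.Icc (2 - b) (2 - a)) := fun s hs =>
    (hGcont s (by linarith [hs.1])).continuousWithinAt
  obtain ⟨x₁, hx₁, hmin⟩ := hJc.exists_isMinOn hJne hJcont
  obtain ⟨x₂, hx₂, hmax⟩ := hJc.exists_isMaxOn hJne hJcont
  have hgminpos : 0 < Real.Gamma x₁ := Real.Gamma_pos_of_pos (by linarith [hx₁.1])
  set Cmax := max (Real.Gamma x₁)⁻¹ (2 / Real.pi) with hCmaxdef
  set M := max (Real.Gamma x₂ * (Real.pi / 2)) (Real.pi / 2) with hMdef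
  have hCpos : ∀ γ ∈ Set.Icc a b, 0 < Cfun γ := fun γ hγ =>
    (Cfun_bound (by linarith [hγ.1]) (by linarith [hγ.2])).1
  have hCle : ∀ γ ∈ Set.Icc a b, Cfun γ ≤ Cmax := by
    intro γ hγ
    refine le_trans (Cfun_bound (by linarith [hγ.1]) (by linarith [hγ.2])).2.1
      (max_le_max ?_ le_rfl)
    have h2γ : 2 - γ ∈ Set.Icc (2 - b) (2 - a) := ⟨by linarith [hγ.2], by linarith [hγ.1]⟩
    exact inv_anti₀ hgminpos (hmin h2γ)
  have hCinvle : ∀ γ ∈ Set.Icc a b, (Cfun γ)⁻¹ ≤ M := by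
    intro γ hγ
    refine le_trans (Cfun_bound (by linarith [hγ.1]) (by linarith [hγ.2])).2.2
      (max_le_max ?_ le_rfl)
    have h2γ : 2 - γ ∈ Set.Icc (2 - b) (2 - a) := ⟨by linarith [hγ.2], by linarith [hγ.1]⟩
    exact mul_le_mul_of_nonneg_right (hmax h2γ) (by positivity)
  set S := sSup ((fun γ => (Cfun γ)⁻¹) '' Set.Icc a b) with hSdef
  have hBdd : BddAbove ((fun γ => (Cfun γ)⁻¹) '' Set.Icc a b) := by
    refine ⟨M, ?_⟩
    rintro y ⟨γ, hγ, rfl⟩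
    exact hCinvle γ hγ
  have hSle : ∀ γ ∈ Set.Icc a b, (Cfun γ)⁻¹ ≤ S := fun γ hγ =>
    le_csSup hBdd ⟨γ, hγ, rfl⟩
  have haab : a ∈ Set.Icc a b := ⟨le_refl a, hab.le⟩
  have hS0 : 0 < S :=
    lt_of_lt_of_le (inv_pos.mpr (hCpos a haab)) (hSle a haab)
  -- the weight function
  set w : ℝ → ℝ := fun x => |ξ⁻¹ * f x| ^ α x * Cfun (α x) with hwdef
  have hwnn : ∀ x, 0 ≤ w x := fun x =>
    mul_nonneg (Real.rpow_nonneg (abs_nonneg _) _) (hCpos _ (hα x)).le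
  have hTf : Tf α f ξ = ∫ x, w x := rfl
  -- measurability of w
  have hGm : Measurable fun x => Real.Gamma (2 - α x) := by
    have hc : Continuous fun s : ℝ => Real.Gamma (max s (2 - b)) := by
      rw [continuous_iff_continuousAt]
      intro s
      have hin : ContinuousAt (fun s : ℝ => max s (2 - b)) s :=
        (continuous_id.max continuous_const).continuousAt
      have hout : ContinuousAt Real.Gamma (max s (2 - b)) :=
        hGcont _ (lt_of_lt_of_le (by linarith : (0:ℝ) < 2 - b) (le_max_right s (2 - b)))
      exact ContinuousAt.comp (g := Real.Gamma) (f := fun s : ℝ => max s (2 - b)) hout hin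
    have he : (fun x => Real.Gamma (2 - α x))
        = fun x => Real.Gamma (max (2 - α x) (2 - b)) := by
      funext x; congr 1
      exact (max_eq_left (by linarith [(hα x).2])).symm
    rw [he]
    exact hc.measurable.comp (measurable_const.sub hαm)
  have hCm : Measurable fun x => Cfun (α x) := by
    have he : (fun x => Cfun (α x)) = fun x => if α x = 1 then 2 / Real.pi
        else (1 - α x) / (Real.Gamma (2 - α x) * Real.cos (Real.pi * α x / 2)) := rfl
    rw [he]
    exact Measurable.ite (hαm (measurableSet_singleton 1)) measurable_const
      ((measurable_const.sub hαm).div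
        (hGm.mul (Real.continuous_cos.measurable.comp ((hαm.const_mul Real.pi).div_const 2))))
  have hvm : Measurable fun x => |ξ⁻¹ * f x| ^ α x := ((measurable_const.mul hfm).abs).pow hαm
  have hwm : Measurable w := hvm.mul hCm
  have hvf : ∀ x, |ξ⁻¹ * f x| ^ α x ≤ |f x| ^ α x := by
    intro x
    refine Real.rpow_le_rpow (abs_nonneg _) ?_ (by linarith [(hα x).1])
    rw [abs_mul, abs_inv, abs_of_pos hξ0]
    calc ξ⁻¹ * |f x| ≤ 1 * |f x| :=
          mul_le_mul_of_nonneg_right (inv_le_one_of_one_le₀ hξ) (abs_nonneg _)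
      _ = |f x| := one_mul _
  have hw : Integrable w := by
    refine (hfi.const_mul Cmax).mono' hwm.aestronglyMeasurable ?_
    filter_upwards with x
    rw [Real.norm_eq_abs, abs_of_nonneg (hwnn x)]
    calc w x ≤ |f x| ^ α x * Cmax :=
          mul_le_mul (hvf x) (hCle (α x) (hα x)) (hCpos _ (hα x)).le
            (Real.rpow_nonneg (abs_nonneg _) _)
      _ = Cmax * |f x| ^ α x := mul_comm _ _
  have hT0 : 0 ≤ Tf α f ξ := by
    rw [hTf]; exact integral_nonneg hwnn
  have hu_nn : ∀ θ : ℝ, 0 ≤ ∫ x, |ξ⁻¹ * θ * f x| ^ α x := fun θ =>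
    integral_nonneg fun x => Real.rpow_nonneg (abs_nonneg _) _
  have hu_le : ∀ θ : ℝ, (∫ x, |ξ⁻¹ * θ * f x| ^ α x)
      ≤ ((1 + |θ|) ^ b * S) * Tf α f ξ := by
    intro θ
    have hptw : ∀ x, |ξ⁻¹ * θ * f x| ^ α x ≤ ((1 + |θ|) ^ b * S) * w x := by
      intro x
      have e1 : |ξ⁻¹ * θ * f x| = |θ| * |ξ⁻¹ * f x| := by
        rw [show ξ⁻¹ * θ * f x = θ * (ξ⁻¹ * f x) by ring, abs_mul]
      rw [e1, Real.mul_rpow (abs_nonneg _) (abs_nonneg _)]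
      have h2 : |θ| ^ α x ≤ (1 + |θ|) ^ b := by
        calc |θ| ^ α x ≤ (1 + |θ|) ^ α x :=
              Real.rpow_le_rpow (abs_nonneg _) (by linarith [abs_nonneg θ])
                (by linarith [(hα x).1])
          _ ≤ (1 + |θ|) ^ b :=
              Real.rpow_le_rpow_of_exponent_le (by linarith [abs_nonneg θ]) (hα x).2
      have h3 : |ξ⁻¹ * f x| ^ α x ≤ S * w x := by
        have hc := hCpos (α x) (hα x)
        calc |ξ⁻¹ * f x| ^ α x
            = |ξ⁻¹ * f x| ^ α x * Cfun (α x) * (Cfun (α x))⁻¹ := by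
              rw [mul_assoc, mul_inv_cancel₀ hc.ne', mul_one]
          _ = w x * (Cfun (α x))⁻¹ := rfl
          _ ≤ w x * S := mul_le_mul_of_nonneg_left (hSle _ (hα x)) (hwnn x)
          _ = S * w x := mul_comm _ _
      calc |θ| ^ α x * |ξ⁻¹ * f x| ^ α x ≤ (1 + |θ|) ^ b * (S * w x) :=
            mul_le_mul h2 h3 (Real.rpow_nonneg (abs_nonneg _) _) (by positivity)
        _ = ((1 + |θ|) ^ b * S) * w x := by ring
    calc (∫ x, |ξ⁻¹ * θ * f x| ^ α x)
        ≤ ∫ x, ((1 + |θ|) ^ b * S) * w x :=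
          integral_mono_of_nonneg
            (Filter.Eventually.of_forall fun x => Real.rpow_nonneg (abs_nonneg _) _)
            (hw.const_mul _) (Filter.Eventually.of_forall hptw)
      _ = ((1 + |θ|) ^ b * S) * ∫ x, w x := integral_const_mul _ _
      _ = ((1 + |θ|) ^ b * S) * Tf α f ξ := by rw [hTf]
  have hmain : rhoF α f φ ξ
      ≤ ∫ θ : ℝ, ((1 + |θ|) ^ (2 * b) * |φ θ|) * (S ^ 2 * (Tf α f ξ) ^ 2) := by
    rw [rhoF]
    refine integral_mono_of_nonneg
      (Filter.Eventually.of_forall fun θ => mul_nonneg (abs_nonneg _) (abs_nonneg _))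
      (hφmom.mul_const _) (Filter.Eventually.of_forall fun θ => ?_)
    have h1 := quad_exp_bound (hu_nn θ)
    have h2 : (∫ x, |ξ⁻¹ * θ * f x| ^ α x) ^ 2
        ≤ (((1 + |θ|) ^ b * S) * Tf α f ξ) ^ 2 :=
      pow_le_pow_left₀ (hu_nn θ) (hu_le θ) 2
    have hx : ((1 + |θ|) ^ b) ^ 2 = (1 + |θ|) ^ (2 * b) := by
      rw [← Real.rpow_natCast ((1 + |θ|) ^ b) 2,
        ← Real.rpow_mul (by positivity : (0:ℝ) ≤ 1 + |θ|)]
      norm_num [mul_comm]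
    have h3 : (((1 + |θ|) ^ b * S) * Tf α f ξ) ^ 2
        = (1 + |θ|) ^ (2 * b) * (S ^ 2 * (Tf α f ξ) ^ 2) := by
      calc (((1 + |θ|) ^ b * S) * Tf α f ξ) ^ 2
          = ((1 + |θ|) ^ b) ^ 2 * (S ^ 2 * (Tf α f ξ) ^ 2) := by ring
        _ = _ := by rw [hx]
    calc |φ θ| * |(∫ x, |ξ⁻¹ * θ * f x| ^ α x) - 1
          + Real.exp (-∫ x, |ξ⁻¹ * θ * f x| ^ α x)|
        ≤ |φ θ| * ((1 + |θ|) ^ (2 * b) * (S ^ 2 * (Tf α f ξ) ^ 2)) :=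
          mul_le_mul_of_nonneg_left (h1.trans (h2.trans_eq h3)) (abs_nonneg _)
      _ = ((1 + |θ|) ^ (2 * b) * |φ θ|) * (S ^ 2 * (Tf α f ξ) ^ 2) := by ring
  calc rhoF α f φ ξ
      ≤ ∫ θ : ℝ, ((1 + |θ|) ^ (2 * b) * |φ θ|) * (S ^ 2 * (Tf α f ξ) ^ 2) := hmain
    _ = (∫ θ : ℝ, (1 + |θ|) ^ (2 * b) * |φ θ|) * (S ^ 2 * (Tf α f ξ) ^ 2) :=
        integral_mul_const _ _
    _ = (∫ θ : ℝ, (1 + |θ|) ^ (2 * b) * |φ θ|) * S ^ 2 * (Tf α f ξ) ^ 2 := by ring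
end
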